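/- Let n ≥ 1 and let K ⊆ ℝⁿ be a convex set containing the Euclidean ball √n · 𝔹_n of radius √n centered at the origin. Let p₁, …, p_M ∈ K (M ≥ 1) and define f(x) = (1/M) · Σ_{i=1}^M γ_n(x − p_i). Then ∫_{3K} f(x) dx ≥ 3/4. -/

import Mathlib

open MeasureTheory Metric Pointwise

namespace Stmt10Aux
open Real

lemma gauss1d : ∫ x : ℝ, Real.exp (-x ^ 2 / 2) = Real.sqrt (2 * π) := by
  have h := integral_gaussian (1/2 : ℝ)
  rw [show (π / (1/2) : ℝ) = 2 * π by ring] at h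
  rw [← h]
  congr 1 with x
  congr 1
  ring

lemma int1d : Integrable (fun x : ℝ => Real.exp (-x ^ 2 / 2)) := by
  have h := integrable_exp_neg_mul_sq (by norm_num : (0:ℝ) < 1/2)
  refine h.congr ?_
  filter_upwards with x
  congr 1
  ring

lemma int1d_sq : Integrable (fun x : ℝ => x ^ 2 * Real.exp (-x ^ 2 / 2)) := by
  have h := integrable_rpow_mul_exp_neg_mul_sq (by norm_num : (0:ℝ) < 1/2)
    (by norm_num : (-1:ℝ) < 2)
  refine h.congr ?_
  filter_upwards with x
  rw [show ((2:ℝ)) = ((2:ℕ):ℝ) by norm_num, Real.rpow_natCast]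
  congr 2
  ring

lemma gauss1d_sq : ∫ x : ℝ, x ^ 2 * Real.exp (-x ^ 2 / 2) = Real.sqrt (2 * π) := by
  have hu : ∀ x : ℝ, HasDerivAt (fun y : ℝ => y) 1 x := fun x => hasDerivAt_id x
  have hv : ∀ x : ℝ, HasDerivAt (fun y : ℝ => -Real.exp (-y ^ 2 / 2))
      (x * Real.exp (-x ^ 2 / 2)) x := by
    intro x
    have h1 : HasDerivAt (fun y : ℝ => -y ^ 2 / 2) (-x) x := by
      have := ((hasDerivAt_pow 2 x).neg).div_const 2
      simpa using this.congr_deriv (by push_cast; ring)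
    have := (h1.exp).neg
    exact this.congr_deriv (by ring)
  have huv' : Integrable ((fun y : ℝ => y) * fun x => x * Real.exp (-x ^ 2 / 2)) := by
    refine int1d_sq.congr ?_
    filter_upwards with x
    simp [Pi.mul_apply]; ring
  have hu'v : Integrable ((fun _ : ℝ => (1:ℝ)) * fun y => -Real.exp (-y ^ 2 / 2)) := by
    refine int1d.neg.congr ?_
    filter_upwards with x
    simp [Pi.mul_apply]
  have huv : Integrable ((fun y : ℝ => y) * fun y => -Real.exp (-y ^ 2 / 2)) := by
    have h := integrable_mul_exp_neg_mul_sq (by norm_num : (0:ℝ) < 1/2)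
    refine h.neg.congr ?_
    filter_upwards with x
    simp only [Pi.mul_apply, Pi.neg_apply]
    rw [show -(1/2 : ℝ) * x ^ 2 = -x ^ 2 / 2 by ring]
    ring
  have h := integral_mul_deriv_eq_deriv_mul_of_integrable (fun x _ => hu x) (fun x _ => hv x) huv' hu'v huv
  rw [show (∫ x : ℝ, x ^ 2 * Real.exp (-x ^ 2 / 2)) =
      ∫ x : ℝ, x * (x * Real.exp (-x ^ 2 / 2)) by congr 1 with x; ring, h]
  rw [← gauss1d]
  simp [integral_neg]


variable (n : ℕ)

local notation "E" => EuclideanSpace ℝ (Fin n)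

lemma norm_symm_sq (v : Fin n → ℝ) :
    ‖((MeasurableEquiv.toLp 2 (Fin n → ℝ)).symm).symm v‖ ^ 2 = ∑ i, (v i) ^ 2 := by
  simp only [MeasurableEquiv.symm_symm, MeasurableEquiv.toLp_apply,
    EuclideanSpace.norm_eq, Real.norm_eq_abs, sq_abs]
  rw [Real.sq_sqrt]
  exact Finset.sum_nonneg fun i _ => by positivity

private noncomputable def g (j i : Fin n) : ℝ → ℝ :=
  if i = j then (fun t : ℝ => t ^ 2 * Real.exp (-t ^ 2 / 2))
  else (fun t : ℝ => Real.exp (-t ^ 2 / 2))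

lemma g_int (j i : Fin n) : Integrable (g n j i) := by
  unfold g; split
  · exact int1d_sq
  · exact int1d

lemma g_integral (j i : Fin n) : ∫ t : ℝ, g n j i t = Real.sqrt (2 * π) := by
  unfold g; split
  · exact gauss1d_sq
  · exact gauss1d

lemma g_prod (j : Fin n) (v : Fin n → ℝ) :
    ∏ i, g n j i (v i) = (v j) ^ 2 * ∏ i, Real.exp (-(v i) ^ 2 / 2) := by
  rw [← Finset.mul_prod_erase Finset.univ _ (Finset.mem_univ j),
    ← Finset.mul_prod_erase Finset.univ (fun i => Real.exp (-(v i) ^ 2 / 2)) (Finset.mem_univ j),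
    ← mul_assoc]
  congr 1
  · unfold g; rw [if_pos rfl]
  · exact Finset.prod_congr rfl fun i hi => by
      unfold g; rw [if_neg (Finset.ne_of_mem_erase hi)]

lemma prod_exp (v : Fin n → ℝ) :
    ∏ i, Real.exp (-(v i) ^ 2 / 2) = Real.exp (-(∑ i, (v i) ^ 2) / 2) := by
  rw [← Real.exp_sum, ← Finset.sum_div, ← Finset.sum_neg_distrib]

lemma intE : Integrable (fun v : E => Real.exp (-‖v‖ ^ 2 / 2)) := by
  have hvp := EuclideanSpace.volume_preserving_symm_measurableEquiv_toLp (Fin n)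
  rw [← MeasurePreserving.integrable_comp_emb hvp.symm (MeasurableEquiv.measurableEmbedding _)]
  have : (fun v : E => Real.exp (-‖v‖ ^ 2 / 2)) ∘ ((MeasurableEquiv.toLp 2 (Fin n → ℝ)).symm).symm
      = fun v : Fin n → ℝ => ∏ i, Real.exp (-(v i) ^ 2 / 2) := by
    funext v
    simp only [Function.comp_apply, norm_symm_sq, prod_exp]
  rw [this]
  exact Integrable.fintype_prod fun _ => int1d

lemma sum_prod_eq (v : Fin n → ℝ) :
    (∑ i, (v i) ^ 2) * Real.exp (-(∑ i, (v i) ^ 2) / 2) = ∑ j, ∏ i, g n j i (v i) := by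
  simp only [g_prod, prod_exp, ← Finset.sum_mul]

lemma intE_sq : Integrable (fun v : E => ‖v‖ ^ 2 * Real.exp (-‖v‖ ^ 2 / 2)) := by
  have hvp := EuclideanSpace.volume_preserving_symm_measurableEquiv_toLp (Fin n)
  rw [← MeasurePreserving.integrable_comp_emb hvp.symm (MeasurableEquiv.measurableEmbedding _)]
  have : (fun v : E => ‖v‖ ^ 2 * Real.exp (-‖v‖ ^ 2 / 2)) ∘
        ((MeasurableEquiv.toLp 2 (Fin n → ℝ)).symm).symm
      = fun v : Fin n → ℝ => ∑ j, ∏ i, g n j i (v i) := by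
    funext v
    simp only [Function.comp_apply, norm_symm_sq, sum_prod_eq]
  rw [this]
  exact integrable_finset_sum _ fun j _ => Integrable.fintype_prod fun i => g_int n j i

lemma gaussE : ∫ v : E, Real.exp (-‖v‖ ^ 2 / 2) = Real.sqrt (2 * π) ^ n := by
  have hvp := EuclideanSpace.volume_preserving_symm_measurableEquiv_toLp (Fin n)
  have h2 := hvp.symm ((MeasurableEquiv.toLp 2 (Fin n → ℝ)).symm)
  rw [← h2.integral_comp (MeasurableEquiv.measurableEmbedding _)]
  simp only [norm_symm_sq, ← prod_exp]
  rw [integral_fintype_prod_volume_eq_pow (fun t : ℝ => Real.exp (-t ^ 2 / 2)), gauss1d]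
  simp

lemma gaussE_sq : ∫ v : E, ‖v‖ ^ 2 * Real.exp (-‖v‖ ^ 2 / 2)
    = n * Real.sqrt (2 * π) ^ n := by
  have hvp := EuclideanSpace.volume_preserving_symm_measurableEquiv_toLp (Fin n)
  have h2 := hvp.symm ((MeasurableEquiv.toLp 2 (Fin n → ℝ)).symm)
  rw [← h2.integral_comp (MeasurableEquiv.measurableEmbedding _)]
  simp only [norm_symm_sq, sum_prod_eq]
  rw [integral_finset_sum (μ := volume) _ fun j _ => Integrable.fintype_prod fun i => g_int n j i]
  have : ∀ j : Fin n, (∫ v : Fin n → ℝ, ∏ i, g n j i (v i)) = Real.sqrt (2 * π) ^ n := by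
    intro j
    rw [integral_fintype_prod_volume_eq_prod]
    simp only [g_integral]
    simp
  simp only [this, Finset.sum_const, Finset.card_univ, Fintype.card_fin, nsmul_eq_mul]

lemma norm_const : (2 * π) ^ (-(n : ℝ) / 2) * Real.sqrt (2 * π) ^ n = 1 := by
  have h2π : (0:ℝ) < 2 * π := by positivity
  rw [Real.sqrt_eq_rpow,
    ← Real.rpow_natCast ((2*π) ^ ((1:ℝ)/2)) n, ← Real.rpow_mul h2π.le,
    ← Real.rpow_add h2π]
  rw [show (-(n:ℝ)/2 + 1/2 * n) = 0 by ring, Real.rpow_zero]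




lemma ballE (hn : 1 ≤ n) :
    3 / 4 ≤ ∫ x in closedBall (0 : E) (2 * Real.sqrt n),
      (2 * π) ^ (-(n : ℝ) / 2) * Real.exp (-‖x‖ ^ 2 / 2) := by
  set c : ℝ := (2 * π) ^ (-(n : ℝ) / 2) with hc_def
  have hc : 0 < c := Real.rpow_pos_of_pos (by positivity) _
  have hn0 : (0:ℝ) < n := by exact_mod_cast hn
  set γ : E → ℝ := fun x => c * Real.exp (-‖x‖ ^ 2 / 2) with hγ_def
  have intγ : Integrable γ := (intE n).const_mul c
  have hγ_nonneg : ∀ x, 0 ≤ γ x := fun x => by positivity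
  have hB : MeasurableSet (closedBall (0 : E) (2 * Real.sqrt n)) := measurableSet_closedBall
  have h_total : ∫ x : E, γ x = 1 := by
    rw [hγ_def]
    rw [MeasureTheory.integral_const_mul, gaussE]
    exact norm_const n
  have intmaj : Integrable (fun x : E => c / (4 * n) * (‖x‖ ^ 2 * Real.exp (-‖x‖ ^ 2 / 2))) :=
    (intE_sq n).const_mul _
  have h_maj_int : ∫ x : E, c / (4 * n) * (‖x‖ ^ 2 * Real.exp (-‖x‖ ^ 2 / 2)) = 1 / 4 := by
    rw [MeasureTheory.integral_const_mul, gaussE_sq]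
    have h := norm_const n
    rw [← hc_def] at h
    have hrw : c / (4 * n) * (n * Real.sqrt (2 * π) ^ n)
        = (c * Real.sqrt (2 * π) ^ n) * ((n:ℝ) / (4 * n)) := by ring
    have hn' : ((n:ℝ)) / (4 * n) = 1 / 4 := by
      rw [mul_comm, div_mul_eq_div_div]
      rw [div_self (by exact_mod_cast hn0.ne')]
    rw [hrw, h, one_mul, hn']
  have h_tail : ∫ x in (closedBall (0 : E) (2 * Real.sqrt n))ᶜ, γ x ≤ 1 / 4 := by
    have step1 : ∫ x in (closedBall (0 : E) (2 * Real.sqrt n))ᶜ, γ x ≤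
        ∫ x in (closedBall (0 : E) (2 * Real.sqrt n))ᶜ,
          c / (4 * n) * (‖x‖ ^ 2 * Real.exp (-‖x‖ ^ 2 / 2)) := by
      refine setIntegral_mono_on intγ.integrableOn intmaj.integrableOn hB.compl ?_
      intro x hx
      have hxn : 2 * Real.sqrt n < ‖x‖ := by
        simp only [Set.mem_compl_iff, mem_closedBall, dist_zero_right, not_le] at hx
        exact hx
      have h4n : 4 * (n:ℝ) ≤ ‖x‖ ^ 2 := by
        have h1 : (2 * Real.sqrt n) ^ 2 ≤ ‖x‖ ^ 2 := by
          apply pow_le_pow_left₀ (by positivity) hxn.le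
        rw [mul_pow, Real.sq_sqrt hn0.le] at h1
        linarith
      have h1le : 1 ≤ ‖x‖ ^ 2 / (4 * n) := by
        rw [le_div_iff₀ (by positivity)]
        linarith
      have : γ x = 1 * γ x := (one_mul _).symm
      rw [this]
      calc 1 * γ x ≤ (‖x‖ ^ 2 / (4 * n)) * γ x :=
            mul_le_mul_of_nonneg_right h1le (hγ_nonneg x)
        _ = c / (4 * n) * (‖x‖ ^ 2 * Real.exp (-‖x‖ ^ 2 / 2)) := by rw [hγ_def]; ring
    have step2 : ∫ x in (closedBall (0 : E) (2 * Real.sqrt n))ᶜ,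
        c / (4 * n) * (‖x‖ ^ 2 * Real.exp (-‖x‖ ^ 2 / 2)) ≤ 1 / 4 := by
      rw [← h_maj_int]
      apply setIntegral_le_integral intmaj
      filter_upwards with x
      positivity
    linarith
  have h_split := MeasureTheory.integral_add_compl hB intγ
  linarith

lemma transE (hn : 1 ≤ n) (K : Set E) (hK : Convex ℝ K)
    (hball : closedBall (0 : E) (Real.sqrt n) ⊆ K) (q : E) (hq : q ∈ K) :
    3 / 4 ≤ ∫ x in (3 : ℝ) • K,
      (2 * π) ^ (-(n : ℝ) / 2) * Real.exp (-‖x - q‖ ^ 2 / 2) := by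
  set c : ℝ := (2 * π) ^ (-(n : ℝ) / 2) with hc_def
  have hc : 0 < c := Real.rpow_pos_of_pos (by positivity) _
  set B : Set E := closedBall (0 : E) (2 * Real.sqrt n) with hB_def
  -- integrability of the translated gaussian
  have hint : Integrable (fun x : E => c * Real.exp (-‖x - q‖ ^ 2 / 2)) := by
    have hmp := measurePreserving_sub_right (volume : Measure E) q
    have := (hmp.integrable_comp_emb (MeasurableEquiv.subRight q).measurableEmbedding
      (g := fun x : E => c * Real.exp (-‖x‖ ^ 2 / 2))).mpr ((intE n).const_mul c)
    exact this
  -- the translated ball sits inside 3 • K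
  have h1 : ((· + q) '' B) ⊆ (3 : ℝ) • K := by
    rintro _ ⟨y, hy, rfl⟩
    have hy' : ‖y‖ ≤ 2 * Real.sqrt n := by
      simpa [hB_def, mem_closedBall, dist_zero_right] using hy
    have hhalf : (2⁻¹ : ℝ) • y ∈ closedBall (0 : E) (Real.sqrt n) := by
      simp only [mem_closedBall, dist_zero_right, norm_smul, norm_inv, Real.norm_ofNat]
      linarith [hy']
    have hz : (3⁻¹ : ℝ) • (y + q) ∈ K := by
      have combo : (3⁻¹ : ℝ) • (y + q)
          = (2/3 : ℝ) • ((2⁻¹ : ℝ) • y) + (1/3 : ℝ) • q := by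
        rw [smul_smul, smul_add]
        norm_num
      rw [combo]
      exact hK (hball hhalf) hq (by norm_num) (by norm_num) (by norm_num)
    refine Set.mem_smul_set.mpr ⟨(3⁻¹ : ℝ) • (y + q), hz, ?_⟩
    rw [smul_smul]
    norm_num
  calc (3:ℝ) / 4 ≤ ∫ x in B, c * Real.exp (-‖x‖ ^ 2 / 2) := ballE n hn
    _ = ∫ x in ((· + q) '' B), c * Real.exp (-‖x - q‖ ^ 2 / 2) := by
        rw [(measurePreserving_add_right (volume : Measure E) q).setIntegral_image_emb
          (measurableEmbedding_addRight q) (fun x => c * Real.exp (-‖x - q‖ ^ 2 / 2)) B]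
        congr 1 with x
        simp [add_sub_cancel_right]
    _ ≤ ∫ x in (3 : ℝ) • K, c * Real.exp (-‖x - q‖ ^ 2 / 2) := by
        apply setIntegral_mono_set hint.integrableOn
        · filter_upwards with x
          positivity
        · exact Filter.Eventually.of_forall fun x hx => h1 hx
end Stmt10Aux

open Real in
/-- If `K ⊆ ℝⁿ` is convex and contains the ball `√n 𝔹_n`, and `p₁, …, p_M ∈ K`, then the
Gaussian mixture `f(x) = (1/M) ∑ γ_n(x - pᵢ)` satisfies `∫_{3K} f ≥ 3/4`. -/
theorem stmt_10 (n : ℕ) (hn : 1 ≤ n) (K : Set (EuclideanSpace ℝ (Fin n)))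
    (hK : Convex ℝ K)
    (hball : closedBall (0 : EuclideanSpace ℝ (Fin n)) (Real.sqrt n) ⊆ K)
    (M : ℕ) (hM : 1 ≤ M) (p : Fin M → EuclideanSpace ℝ (Fin n)) (hp : ∀ i, p i ∈ K)
    (f : EuclideanSpace ℝ (Fin n) → ℝ)
    (hf : ∀ x, f x = (1 / (M : ℝ)) *
      ∑ i, (2 * Real.pi) ^ (-(n : ℝ) / 2) * Real.exp (-‖x - p i‖ ^ 2 / 2)) :
    3 / 4 ≤ ∫ x in (3 : ℝ) • K, f x := by
  set c : ℝ := (2 * π) ^ (-(n : ℝ) / 2) with hc_def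
  have hM0 : (0:ℝ) < M := by exact_mod_cast hM
  have hint : ∀ i : Fin M,
      Integrable (fun x : EuclideanSpace ℝ (Fin n) => c * Real.exp (-‖x - p i‖ ^ 2 / 2)) := by
    intro i
    have hmp := measurePreserving_sub_right (volume : Measure (EuclideanSpace ℝ (Fin n))) (p i)
    exact (hmp.integrable_comp_emb (MeasurableEquiv.subRight (p i)).measurableEmbedding
      (g := fun x : EuclideanSpace ℝ (Fin n) => c * Real.exp (-‖x‖ ^ 2 / 2))).mpr
      ((Stmt10Aux.intE n).const_mul c)
  have hfr : (∫ x in (3 : ℝ) • K, f x)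
      = (1 / (M : ℝ)) * ∑ i, ∫ x in (3 : ℝ) • K, c * Real.exp (-‖x - p i‖ ^ 2 / 2) := by
    simp only [hf]
    rw [MeasureTheory.integral_const_mul]
    congr 1
    rw [integral_finset_sum _ fun i _ => (hint i).integrableOn]
  rw [hfr]
  have hsum : (M : ℝ) * (3 / 4) ≤ ∑ i, ∫ x in (3 : ℝ) • K,
      c * Real.exp (-‖x - p i‖ ^ 2 / 2) := by
    have := Finset.card_nsmul_le_sum Finset.univ
      (fun i : Fin M => ∫ x in (3 : ℝ) • K, c * Real.exp (-‖x - p i‖ ^ 2 / 2)) (3/4)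
      (fun i _ => Stmt10Aux.transE n hn K hK hball (p i) (hp i))
    simpa [nsmul_eq_mul] using this
  calc (3:ℝ)/4 = (1 / (M:ℝ)) * ((M:ℝ) * (3/4)) := by field_simp
    _ ≤ (1 / (M:ℝ)) * ∑ i, ∫ x in (3 : ℝ) • K, c * Real.exp (-‖x - p i‖ ^ 2 / 2) := by
        apply mul_le_mul_of_nonneg_left hsum (by positivity)
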